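/- For every ε > 0, the domain Ω_ε := {(z,w) ∈ ℂ² : |w| < |z| and |z| > ε} is Kobayashi hyperbolic. -/

import Mathlib

open Metric Set

noncomputable def kob {E : Type*} [NormedAddCommGroup E] [NormedSpace ℂ E]
    (Ω : Set E) (z v : E) : ℝ :=
  sInf {c : ℝ | ∃ r : ℝ, 0 < r ∧ c = 1 / r ∧ ∃ f : ℂ → E,
    DifferentiableOn ℂ f (ball (0 : ℂ) r) ∧ f 0 = z ∧ deriv f 0 = v ∧
    MapsTo f (ball (0 : ℂ) r) Ω}

/-- A set `Ω` is Kobayashi hyperbolic if around every point the Kobayashi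
pseudometric admits a positive lower bound comparable to the norm. -/
def KobayashiHyperbolic {E : Type*} [NormedAddCommGroup E] [NormedSpace ℂ E]
    (Ω : Set E) : Prop :=
  ∀ p ∈ Ω, ∃ U ∈ nhds p, ∃ c > 0, ∀ q ∈ U ∩ Ω, ∀ v : E, c * ‖v‖ ≤ kob Ω q v

/-- Sub-mean value inequality on all closed disks contained in `S`. -/
def SubmeanOn (u : ℂ → ℝ) (S : Set ℂ) : Prop :=
  ∀ c : ℂ, ∀ s : ℝ, 0 < s → closedBall c s ⊆ S →
    u c ≤ (2 * Real.pi)⁻¹ *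
      ∫ θ in (0 : ℝ)..(2 * Real.pi), u (c + (s : ℂ) * Complex.exp ((θ : ℂ) * Complex.I))

def SubharmonicOn (u : ℂ → ℝ) (S : Set ℂ) : Prop :=
  UpperSemicontinuousOn u S ∧ SubmeanOn u S

/-- Plurisubharmonic: upper semicontinuous and subharmonic on every complex line. -/
def PSHOn {E : Type*} [NormedAddCommGroup E] [NormedSpace ℂ E]
    (u : E → ℝ) (Ω : Set E) : Prop :=
  UpperSemicontinuousOn u Ω ∧
    ∀ a b : E, SubmeanOn (fun lam : ℂ => u (a + lam • b)) {lam : ℂ | a + lam • b ∈ Ω}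

/-- For every ε > 0, the domain Ω_ε = {(z,w) : |w| < |z|, |z| > ε} ⊂ ℂ² is
Kobayashi hyperbolic. -/
theorem stmt_2 (ε : ℝ) (hε : 0 < ε) :
    KobayashiHyperbolic
      {p : ℂ × ℂ | ‖p.2‖ < ‖p.1‖ ∧ ε < ‖p.1‖} := by
  set Ω : Set (ℂ × ℂ) :=
    {p : ℂ × ℂ | ‖p.2‖ < ‖p.1‖ ∧ ε < ‖p.1‖} with hΩdef
  have hΩopen : IsOpen Ω := by
    have h1 : IsOpen {p : ℂ × ℂ | ‖p.2‖ < ‖p.1‖} :=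
      isOpen_lt (continuous_norm.comp continuous_snd)
        (continuous_norm.comp continuous_fst)
    have h2 : IsOpen {p : ℂ × ℂ | ε < ‖p.1‖} :=
      isOpen_lt continuous_const (continuous_norm.comp continuous_fst)
    exact h1.inter h2
  intro p hp
  set M : ℝ := ‖p.1‖ + 1 with hMdef
  have hM0 : 0 < M := by positivity
  have hεM : ε < M := by
    have := hp.2
    linarith
  set c₀ : ℝ := ε ^ 2 / (2 * M ^ 2 * (ε + M)) with hc₀def
  have hc₀pos : 0 < c₀ := by positivity
  refine ⟨ball p 1, ball_mem_nhds p one_pos, c₀, hc₀pos, ?_⟩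
  rintro q ⟨hqball, hqΩ⟩ v
  -- basic facts about q
  have hq1ε : ε < ‖q.1‖ := by
    have := hqΩ.2; exact this
  have hq1pos : 0 < ‖q.1‖ := lt_trans hε hq1ε
  have hq1ne : q.1 ≠ 0 := norm_pos_iff.mp hq1pos
  have hq1M : ‖q.1‖ < M := by
    have h1 : ‖q.1 - p.1‖ ≤ ‖q - p‖ := norm_fst_le (q - p)
    have h2 : ‖q - p‖ < 1 := by rwa [mem_ball, dist_eq_norm] at hqball
    have h3 : ‖q.1‖ - ‖p.1‖ ≤ ‖q.1 - p.1‖ := norm_sub_norm_le _ _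
    rw [hMdef]; linarith
  have hq2 : ‖q.2‖ < ‖q.1‖ := by
    have := hqΩ.1; exact this
  -- lower bound on the Kobayashi pseudometric
  rw [kob]
  apply le_csInf
  · -- nonemptiness: the affine disk q + λ v
    obtain ⟨δ, hδ, hδΩ⟩ := Metric.isOpen_iff.1 hΩopen q hqΩ
    refine ⟨(‖v‖ + 1) / δ, δ / (‖v‖ + 1), by positivity, by
      rw [one_div_div], fun lam => q + lam • v, ?_, by simp, ?_, ?_⟩
    · exact (differentiable_const q |>.add ((differentiable_id).smul_const v)).differentiableOn
    · have : HasDerivAt (fun lam : ℂ => q + lam • v) ((1 : ℂ) • v) 0 :=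
        ((hasDerivAt_id (0 : ℂ)).smul_const v).const_add q
      rw [this.deriv, one_smul]
    · intro lam hlam
      apply hδΩ
      rw [mem_ball, dist_eq_norm]
      have h1 : ‖q + lam • v - q‖ = ‖lam‖ * ‖v‖ := by
        rw [add_sub_cancel_left, norm_smul]
      rw [h1]
      have h2 : ‖lam‖ < δ / (‖v‖ + 1) := by rwa [mem_ball, dist_zero_right] at hlam
      have hv1 : (0:ℝ) < ‖v‖ + 1 := by positivity
      calc ‖lam‖ * ‖v‖ ≤ ‖lam‖ * (‖v‖ + 1) := by
            have := norm_nonneg lam; nlinarith [norm_nonneg v]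
        _ < δ / (‖v‖ + 1) * (‖v‖ + 1) := by
            exact mul_lt_mul_of_pos_right h2 hv1
        _ = δ := by field_simp
  · -- lower bound on every competitor
    rintro b ⟨r, hr, rfl, f, hfd, hf0, hdf, hmaps⟩
    have h0mem : (0 : ℂ) ∈ ball (0 : ℂ) r := mem_ball_self hr
    have hfim : ∀ lam ∈ ball (0 : ℂ) r,
        ‖(f lam).2‖ < ‖(f lam).1‖ ∧ ε < ‖(f lam).1‖ := by
      intro lam hlam
      have := hmaps hlam
      rw [hΩdef] at this
      exact ⟨by have := this.1; exact this,
        by have := this.2; exact this⟩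
    have hfne : ∀ lam ∈ ball (0 : ℂ) r, (f lam).1 ≠ 0 := by
      intro lam hlam h
      have := (hfim lam hlam).2
      rw [h] at this; simp at this; linarith
    -- derivative of f at 0
    have hfda : DifferentiableAt ℂ f 0 :=
      hfd.differentiableAt (isOpen_ball.mem_nhds h0mem)
    have hF : HasDerivAt f v 0 := by
      have := hfda.hasDerivAt
      rwa [hdf] at this
    have hF1 : HasDerivAt (fun lam => (f lam).1) v.1 0 := by
      simpa using hF.hasFDerivAt.fst.hasDerivAt
    have hF2 : HasDerivAt (fun lam => (f lam).2) v.2 0 := by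
      simpa using hF.hasFDerivAt.snd.hasDerivAt
    -- first Schwarz estimate: h = 1/f₁
    have hinv : ∀ x : ℝ, ε < x → x⁻¹ < ε⁻¹ := by
      intro x hx
      exact inv_strictAnti₀ hε hx
    have hSchwarz1 : ‖v.1‖ / ‖q.1‖ ^ 2 ≤ 2 / ε / r := by
      set h : ℂ → ℂ := fun lam => ((f lam).1)⁻¹ with hhdef
      have hhd : DifferentiableOn ℂ h (ball (0 : ℂ) r) := (hfd.fst).inv hfne
      have hh0 : HasDerivAt h (-v.1 / q.1 ^ 2) 0 := by
        have := hF1.inv (by rw [hf0]; exact hq1ne)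
        rwa [hf0] at this
      have hnorm : ∀ lam ∈ ball (0 : ℂ) r, ‖h lam‖ < ε⁻¹ := by
        intro lam hlam
        rw [hhdef]
        simp only [norm_inv]
        exact hinv _ (hfim lam hlam).2
      have hmaps' : MapsTo h (ball (0 : ℂ) r) (ball (h 0) (2 / ε)) := by
        intro lam hlam
        rw [mem_ball, dist_eq_norm]
        calc ‖h lam - h 0‖ ≤ ‖h lam‖ + ‖h 0‖ := norm_sub_le _ _
          _ < ε⁻¹ + ε⁻¹ := add_lt_add (hnorm lam hlam) (hnorm 0 h0mem)
          _ = 2 / ε := by ring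
      have := Complex.norm_deriv_le_div_of_mapsTo_ball hhd (hmaps'.mono_right ball_subset_closedBall) hr
      rw [hh0.deriv] at this
      calc ‖v.1‖ / ‖q.1‖ ^ 2 = ‖-v.1 / q.1 ^ 2‖ := by
            rw [norm_div, norm_neg, norm_pow]
        _ ≤ 2 / ε / r := this
    -- second Schwarz estimate: g = f₂ / f₁
    have hSchwarz2 : ‖v.2 * q.1 - q.2 * v.1‖ / ‖q.1‖ ^ 2 ≤ 2 / r := by
      set g : ℂ → ℂ := fun lam => (f lam).2 / (f lam).1 with hgdef
      have hgd : DifferentiableOn ℂ g (ball (0 : ℂ) r) := (hfd.snd).div (hfd.fst) hfne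
      have hg0 : HasDerivAt g ((v.2 * q.1 - q.2 * v.1) / q.1 ^ 2) 0 := by
        have := hF2.div hF1 (by rw [hf0]; exact hq1ne)
        rwa [hf0] at this
      have hnorm : ∀ lam ∈ ball (0 : ℂ) r, ‖g lam‖ < 1 := by
        intro lam hlam
        rw [hgdef]
        simp only [norm_div]
        rw [div_lt_one (lt_trans hε (hfim lam hlam).2)]
        exact (hfim lam hlam).1
      have hmaps' : MapsTo g (ball (0 : ℂ) r) (ball (g 0) 2) := by
        intro lam hlam
        rw [mem_ball, dist_eq_norm]
        calc ‖g lam - g 0‖ ≤ ‖g lam‖ + ‖g 0‖ := norm_sub_le _ _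
          _ < 1 + 1 := add_lt_add (hnorm lam hlam) (hnorm 0 h0mem)
          _ = 2 := by ring
      have := Complex.norm_deriv_le_div_of_mapsTo_ball hgd (hmaps'.mono_right ball_subset_closedBall) hr
      rw [hg0.deriv] at this
      calc ‖v.2 * q.1 - q.2 * v.1‖ / ‖q.1‖ ^ 2 = ‖(v.2 * q.1 - q.2 * v.1) / q.1 ^ 2‖ := by
            rw [norm_div, norm_pow]
        _ ≤ 2 / r := this
    -- arithmetic: combine the estimates
    set a : ℝ := ‖v.1‖ with hadef
    set b : ℝ := ‖v.2‖ with hbdef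
    have ha0 : 0 ≤ a := norm_nonneg _
    have hb0 : 0 ≤ b := norm_nonneg _
    have hA2 : (0:ℝ) < ‖q.1‖ ^ 2 := by positivity
    -- P1 : a * (ε * r) ≤ 2 * M ^ 2
    have P1 : a * (ε * r) ≤ 2 * M ^ 2 := by
      rw [div_div, div_le_div_iff₀ hA2 (by positivity : (0:ℝ) < ε * r)] at hSchwarz1
      nlinarith [norm_nonneg q.1]
    -- P2 : D * r ≤ 2 * M ^ 2
    have P2 : ‖v.2 * q.1 - q.2 * v.1‖ * r ≤ 2 * M ^ 2 := by
      rw [div_le_div_iff₀ hA2 hr] at hSchwarz2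
      nlinarith [norm_nonneg q.1, norm_nonneg (v.2 * q.1 - q.2 * v.1)]
    -- P3 : b * ε ≤ D + M * a
    have P3 : b * ε ≤ ‖v.2 * q.1 - q.2 * v.1‖ + M * a := by
      have h1 : b * ‖q.1‖ ≤ ‖v.2 * q.1 - q.2 * v.1‖ + ‖q.2‖ * a := by
        have : ‖v.2 * q.1‖ ≤ ‖v.2 * q.1 - q.2 * v.1‖ + ‖q.2 * v.1‖ := by
          calc ‖v.2 * q.1‖ = ‖(v.2 * q.1 - q.2 * v.1) + q.2 * v.1‖ := by ring_nf
            _ ≤ _ := norm_add_le _ _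
        simpa [norm_mul, hadef, hbdef] using this
      have h2 : b * ε ≤ b * ‖q.1‖ := by nlinarith
      have h3 : ‖q.2‖ * a ≤ M * a := by nlinarith [lt_trans hq2 hq1M]
      linarith
    -- P4 : b * (ε ^ 2 * r) ≤ 2 * M ^ 2 * (ε + M)
    have P4 : b * (ε ^ 2 * r) ≤ 2 * M ^ 2 * (ε + M) := by
      set D : ℝ := ‖v.2 * q.1 - q.2 * v.1‖ with hDdef
      have e1 : (b * ε) * r ≤ (D + M * a) * r := mul_le_mul_of_nonneg_right P3 hr.le
      have e2 : ((b * ε) * r) * ε ≤ ((D + M * a) * r) * ε :=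
        mul_le_mul_of_nonneg_right e1 hε.le
      have e3 : (D * r) * ε ≤ (2 * M ^ 2) * ε := mul_le_mul_of_nonneg_right P2 hε.le
      have e4 : M * (a * (ε * r)) ≤ M * (2 * M ^ 2) := mul_le_mul_of_nonneg_left P1 hM0.le
      calc b * (ε ^ 2 * r) = ((b * ε) * r) * ε := by ring
        _ ≤ ((D + M * a) * r) * ε := e2
        _ = (D * r) * ε + M * (a * (ε * r)) := by ring
        _ ≤ (2 * M ^ 2) * ε + M * (2 * M ^ 2) := add_le_add e3 e4
        _ = 2 * M ^ 2 * (ε + M) := by ring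
    -- conclusion
    have hnv : ‖v‖ = max a b := Prod.norm_def v
    have key : ∀ x : ℝ, 0 ≤ x → x * (ε ^ 2 * r) ≤ 2 * M ^ 2 * (ε + M) → c₀ * x ≤ 1 / r := by
      intro x hx hxx
      rw [hc₀def, div_mul_eq_mul_div, div_le_div_iff₀ (by positivity) hr]
      linarith [hxx]
    rw [hnv, mul_max_of_nonneg _ _ (le_of_lt hc₀pos), max_le_iff]
    constructor
    · apply key a ha0
      have e5 : (a * (ε * r)) * ε ≤ (2 * M ^ 2) * ε := mul_le_mul_of_nonneg_right P1 hε.le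
      have e6 : (0:ℝ) ≤ 2 * M ^ 2 * M := by positivity
      calc a * (ε ^ 2 * r) = (a * (ε * r)) * ε := by ring
        _ ≤ (2 * M ^ 2) * ε := e5
        _ ≤ 2 * M ^ 2 * (ε + M) := by linarith
    · exact key b hb0 P4
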